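/- arXiv:quant-ph/0307148 — 3 statements merged into one kernel-verified Lean document; each statement's English description precedes it below -/
import Mathlib

section
/- The weight (number of non-identity factors) of the Pauli product appearing in a nonzero commutator of two Pauli products P(a) and P(b) satisfies: it is contained in the union of their supports, contains the symmetric difference of their supports, and intersects the intersection of their supports in an odd number of positions. -/
open Matrix Complex

noncomputable def pauli : Fin 4 → Matrix (Fin 2) (Fin 2) ℂ
  | 0 => 1
  | 1 => !![0, 1; 1, 0]
  | 2 => !![0, -I; I, 0]
  | 3 => !![1, 0; 0, -1]

/-- Tensor product of Pauli matrices indexed by `a : Fin n → Fin 4`. -/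
noncomputable def PauliProd {n : ℕ} (a : Fin n → Fin 4) :
    Matrix (Fin n → Fin 2) (Fin n → Fin 2) ℂ :=
  Matrix.of fun i j => ∏ k, pauli (a k) (i k) (j k)

/-- Weight: the number of non-identity tensor factors. -/
noncomputable def wt {n : ℕ} (a : Fin n → Fin 4) : ℕ :=
  (Finset.univ.filter fun i => a i ≠ 0).card

/-- Support: the set of qubits on which the Pauli product acts nontrivially. -/
noncomputable def supp {n : ℕ} (a : Fin n → Fin 4) : Finset (Fin n) :=
  Finset.univ.filter fun i => a i ≠ 0

lemma sum_prod_pi {n : ℕ} (f : Fin n → Fin 2 → ℂ) :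
    ∑ x : Fin n → Fin 2, ∏ k, f k (x k) = ∏ k, ∑ a, f k a := by
  rw [Finset.prod_univ_sum, Fintype.piFinset_univ]

noncomputable def eps : Fin 4 → Fin 4 → ℂ
  | 1, 2 => I
  | 2, 1 => -I
  | 2, 3 => I
  | 3, 2 => -I
  | 3, 1 => I
  | 1, 3 => -I
  | _, _ => 1

def pmul : Fin 4 → Fin 4 → Fin 4
  | 0, j => j
  | 1, 0 => 1
  | 2, 0 => 2
  | 3, 0 => 3
  | 1, 1 => 0
  | 1, 2 => 3
  | 1, 3 => 2
  | 2, 1 => 3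
  | 2, 2 => 0
  | 2, 3 => 1
  | 3, 1 => 2
  | 3, 2 => 1
  | 3, 3 => 0

lemma pauli_mul (i j : Fin 4) : pauli i * pauli j = eps i j • pauli (pmul i j) := by
  fin_cases i <;> fin_cases j <;>
    ext x y <;> fin_cases x <;> fin_cases y <;>
      simp [pauli, eps, pmul, Matrix.mul_apply, Fin.sum_univ_two, Matrix.one_apply]

lemma PauliProd_mul {n : ℕ} (a b : Fin n → Fin 4) :
    PauliProd a * PauliProd b =
      (∏ k, eps (a k) (b k)) • PauliProd (fun k => pmul (a k) (b k)) := by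
  ext i j
  simp only [Matrix.mul_apply, PauliProd, Matrix.of_apply, Matrix.smul_apply, smul_eq_mul]
  have : ∀ m : Fin n → Fin 2,
      (∏ k, pauli (a k) (i k) (m k)) * ∏ k, pauli (b k) (m k) (j k)
        = ∏ k, (pauli (a k) (i k) (m k) * pauli (b k) (m k) (j k)) := by
    intro m; rw [← Finset.prod_mul_distrib]
  simp_rw [this]
  rw [sum_prod_pi (fun k m => pauli (a k) (i k) m * pauli (b k) m (j k))]
  rw [← Finset.prod_mul_distrib]
  refine Finset.prod_congr rfl fun k _ => ?_
  have := congrArg (fun M : Matrix (Fin 2) (Fin 2) ℂ => M (i k) (j k)) (pauli_mul (a k) (b k))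
  simpa [Matrix.mul_apply, smul_eq_mul] using this

noncomputable def S (i j : Fin 4) : ℂ := ∑ x, ∑ y, pauli i x y * pauli j x y

lemma S_eq_zero {i j : Fin 4} (h : i ≠ j) : S i j = 0 := by
  fin_cases i <;> fin_cases j <;>
    simp_all [S, pauli, Fin.sum_univ_two, Matrix.one_apply]

lemma S_self_ne (i : Fin 4) : S i i ≠ 0 := by
  fin_cases i <;> simp [S, pauli, Fin.sum_univ_two, Matrix.one_apply]

noncomputable def B {n : ℕ} (d c : Fin n → Fin 4) : ℂ :=
  ∑ x : Fin n → Fin 2, ∑ y : Fin n → Fin 2, PauliProd d x y * PauliProd c x y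

lemma B_eq {n : ℕ} (d c : Fin n → Fin 4) : B d c = ∏ k, S (d k) (c k) := by
  unfold B S PauliProd
  simp only [Matrix.of_apply]
  have h1 : ∀ x : Fin n → Fin 2,
      ∑ y : Fin n → Fin 2, (∏ k, pauli (d k) (x k) (y k)) * ∏ k, pauli (c k) (x k) (y k)
        = ∏ k, ∑ b, pauli (d k) (x k) b * pauli (c k) (x k) b := by
    intro x
    rw [← sum_prod_pi (fun k b => pauli (d k) (x k) b * pauli (c k) (x k) b)]
    refine Finset.sum_congr rfl fun y _ => ?_
    rw [← Finset.prod_mul_distrib]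
  simp_rw [h1]
  rw [sum_prod_pi (fun k xk => ∑ b, pauli (d k) xk b * pauli (c k) xk b)]

lemma eps_ne_zero (i j : Fin 4) : eps i j ≠ 0 := by
  fin_cases i <;> fin_cases j <;> simp [eps]

lemma pmul_comm (i j : Fin 4) : pmul i j = pmul j i := by revert i j; decide

lemma pmul_eq_zero_iff (i j : Fin 4) : pmul i j = 0 ↔ i = j := by revert i j; decide

lemma eps_swap (i j : Fin 4) :
    eps i j = (if i ≠ j ∧ i ≠ 0 ∧ j ≠ 0 then (-1 : ℂ) else 1) * eps j i := by
  fin_cases i <;> fin_cases j <;> simp [eps]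

lemma index_eq_of_smul {n : ℕ} (d c : Fin n → Fin 4) (μ : ℂ)
    (h : PauliProd d = μ • PauliProd c) : d = c := by
  have hBdc : B d c = μ * B c c := by
    unfold B
    rw [h]
    simp [Matrix.smul_apply, smul_eq_mul, Finset.mul_sum, mul_assoc]
  have hBdd : B d d = μ * B d c := by
    unfold B
    conv_lhs => rw [h]
    simp [Matrix.smul_apply, smul_eq_mul, Finset.mul_sum]
    conv_rhs => rw [h]
    simp [Matrix.smul_apply, smul_eq_mul, Finset.mul_sum]
    congr 1; funext x; congr 1; funext y; ring
  have hdd : B d d ≠ 0 := by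
    rw [B_eq]
    exact Finset.prod_ne_zero_iff.2 fun k _ => S_self_ne (d k)
  have hdc : B d c ≠ 0 := by
    intro h0; rw [hBdd, h0, mul_zero] at hdd; exact hdd rfl
  rw [B_eq] at hdc
  funext k
  by_contra hk
  exact hdc (Finset.prod_eq_zero (Finset.mem_univ k) (S_eq_zero hk))


/-- Support structure of a nonzero commutator of two Pauli products. -/
theorem pauli_commutator_support {n : ℕ} (a b c : Fin n → Fin 4) (lam : ℂ)
    (hcomm : PauliProd a * PauliProd b - PauliProd b * PauliProd a ≠ 0)
    (hprod : PauliProd a * PauliProd b = lam • PauliProd c) :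
    supp c ⊆ supp a ∪ supp b ∧
      (supp a \ supp b) ∪ (supp b \ supp a) ⊆ supp c ∧
      Odd ((supp c ∩ supp a ∩ supp b).card) := by
  set d : Fin n → Fin 4 := fun k => pmul (a k) (b k) with hd
  set E : ℂ := ∏ k, eps (a k) (b k) with hE
  set E' : ℂ := ∏ k, eps (b k) (a k) with hE'
  have hEne : E ≠ 0 := Finset.prod_ne_zero_iff.2 fun k _ => eps_ne_zero _ _
  have hab : PauliProd a * PauliProd b = E • PauliProd d := PauliProd_mul a b
  have hba : PauliProd b * PauliProd a = E' • PauliProd d := by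
    rw [PauliProd_mul b a]
    have : (fun k => pmul (b k) (a k)) = d := funext fun k => pmul_comm (b k) (a k)
    rw [this]
  -- c = d
  have hcd : d = c := by
    apply index_eq_of_smul d c (E⁻¹ * lam)
    have : E • PauliProd d = lam • PauliProd c := by rw [← hab, hprod]
    calc PauliProd d = E⁻¹ • E • PauliProd d := by rw [smul_smul, inv_mul_cancel₀ hEne, one_smul]
      _ = E⁻¹ • lam • PauliProd c := by rw [this]
      _ = (E⁻¹ * lam) • PauliProd c := by rw [smul_smul]
  have hsuppc : ∀ k, c k ≠ 0 ↔ a k ≠ b k := by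
    intro k
    rw [← hcd]
    exact not_congr (pmul_eq_zero_iff (a k) (b k))
  refine ⟨?_, ?_, ?_⟩
  · intro k hk
    simp only [supp, Finset.mem_filter, Finset.mem_univ, true_and, Finset.mem_union] at hk ⊢
    rw [hsuppc k] at hk
    by_contra h
    push_neg at h
    exact hk (h.1.trans h.2.symm)
  · intro k hk
    simp only [supp, Finset.mem_filter, Finset.mem_univ, true_and, Finset.mem_union,
      Finset.mem_sdiff, not_not] at hk ⊢
    rw [hsuppc k]
    rcases hk with ⟨h1, h2⟩ | ⟨h1, h2⟩
    · rw [h2]; exact h1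
    · rw [h2]; exact fun h => h1 h.symm
  · -- the anticommuting set
    have hEE' : E ≠ E' := by
      intro h
      apply hcomm
      rw [hab, hba, h, sub_self]
    have hset : supp c ∩ supp a ∩ supp b
        = Finset.univ.filter fun k => a k ≠ b k ∧ a k ≠ 0 ∧ b k ≠ 0 := by
      ext k
      simp only [supp, Finset.mem_inter, Finset.mem_filter, Finset.mem_univ, true_and]
      rw [hsuppc k]
      tauto
    rw [hset]
    by_contra hodd
    rw [← Nat.not_even_iff_odd, not_not] at hodd
    apply hEE'
    rw [hE, hE']
    calc ∏ k, eps (a k) (b k)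
        = ∏ k, ((if a k ≠ b k ∧ a k ≠ 0 ∧ b k ≠ 0 then (-1 : ℂ) else 1) * eps (b k) (a k)) := by
          exact Finset.prod_congr rfl fun k _ => eps_swap (a k) (b k)
      _ = (∏ k, if a k ≠ b k ∧ a k ≠ 0 ∧ b k ≠ 0 then (-1 : ℂ) else 1) * ∏ k, eps (b k) (a k) :=
          Finset.prod_mul_distrib
      _ = ∏ k, eps (b k) (a k) := by
          rw [Finset.prod_ite, Finset.prod_const, Finset.prod_const, one_pow, mul_one,
            Even.neg_one_pow hodd, one_mul]
end

section
/- The conjugation f(A) = Y^{⊗n} Aᵀ Y^{⊗n} acts on a Pauli product P(a) by the sign (-1)^{wt(a)}, and consequently the Lie algebra g generated by odd-weight Paulis times i equals { A : f(A) = -A and A† = -A }. -/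
open Matrix Complex

lemma pauli_herm (s : Fin 4) : (pauli s)ᴴ = pauli s := by
  fin_cases s <;> ext i j <;> fin_cases i <;> fin_cases j <;>
    simp [pauli, Matrix.conjTranspose_apply, Matrix.one_apply]

lemma pauli_sign (s : Fin 4) :
    pauli 2 * pauli s * pauli 2 = (if s = 0 then (1:ℂ) else -1) • (pauli s)ᵀ := by
  fin_cases s <;> ext i j <;> fin_cases i <;> fin_cases j <;>
    simp [pauli, Matrix.mul_apply, Fin.sum_univ_two, Matrix.one_apply,
      Matrix.transpose_apply, Matrix.vecHead, Matrix.vecTail, Complex.ext_iff]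

lemma pauli_sign' (s : Fin 4) :
    pauli 2 * (pauli s)ᵀ * pauli 2 = (if s = 0 then (1:ℂ) else -1) • pauli s := by
  fin_cases s <;> ext i j <;> fin_cases i <;> fin_cases j <;>
    simp [pauli, Matrix.mul_apply, Fin.sum_univ_two, Matrix.one_apply,
      Matrix.transpose_apply, Matrix.vecHead, Matrix.vecTail, Complex.ext_iff,
      Matrix.vecMul, dotProduct]

lemma pauli_complete (i j k l : Fin 2) :
    ∑ s : Fin 4, pauli s i j * pauli s k l = if i = l ∧ j = k then 2 else 0 := by
  fin_cases i <;> fin_cases j <;> fin_cases k <;> fin_cases l <;>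
    simp [pauli, Fin.sum_univ_four, Matrix.one_apply, Complex.ext_iff] <;> norm_num

noncomputable def tensor {n : ℕ} (M : Fin n → Matrix (Fin 2) (Fin 2) ℂ) :
    Matrix (Fin n → Fin 2) (Fin n → Fin 2) ℂ :=
  Matrix.of fun i j => ∏ k, M k (i k) (j k)

lemma tensor_mul {n : ℕ} (M N : Fin n → Matrix (Fin 2) (Fin 2) ℂ) :
    tensor M * tensor N = tensor (fun k => M k * N k) := by
  ext i j
  simp only [tensor, Matrix.mul_apply, Matrix.of_apply, ← Finset.prod_mul_distrib]
  rw [Finset.prod_univ_sum]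
  simp [Fintype.piFinset_univ]

lemma tensor_transpose {n : ℕ} (M : Fin n → Matrix (Fin 2) (Fin 2) ℂ) :
    (tensor M)ᵀ = tensor (fun k => (M k)ᵀ) := rfl

lemma tensor_conjTranspose {n : ℕ} (M : Fin n → Matrix (Fin 2) (Fin 2) ℂ) :
    (tensor M)ᴴ = tensor (fun k => (M k)ᴴ) := by
  ext i j
  simp only [tensor, Matrix.conjTranspose_apply, Matrix.of_apply, star_prod]

lemma tensor_smul {n : ℕ} (c : Fin n → ℂ) (M : Fin n → Matrix (Fin 2) (Fin 2) ℂ) :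
    tensor (fun k => c k • M k) = (∏ k, c k) • tensor M := by
  ext i j
  simp [tensor, Finset.prod_mul_distrib]

lemma PauliProd_eq_tensor {n : ℕ} (a : Fin n → Fin 4) :
    PauliProd a = tensor (fun k => pauli (a k)) := rfl

lemma sign_prod {n : ℕ} (a : Fin n → Fin 4) :
    (∏ k, if a k = 0 then (1:ℂ) else -1) = (-1) ^ (wt a) := by
  rw [Finset.prod_ite, Finset.prod_const, Finset.prod_const, wt]
  simp

lemma PauliProd_herm {n : ℕ} (a : Fin n → Fin 4) : (PauliProd a)ᴴ = PauliProd a := by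
  rw [PauliProd_eq_tensor, tensor_conjTranspose]
  simp [pauli_herm]

lemma YPY {n : ℕ} (a : Fin n → Fin 4) :
    PauliProd (fun _ => 2) * PauliProd a * PauliProd (fun _ => 2)
      = ((-1 : ℂ) ^ (wt a)) • (PauliProd a)ᵀ := by
  simp only [PauliProd_eq_tensor, tensor_mul]
  have : (fun k => pauli 2 * pauli (a k) * pauli 2)
      = fun k => (if a k = 0 then (1:ℂ) else -1) • (pauli (a k))ᵀ := by
    funext k; exact pauli_sign (a k)
  rw [this, tensor_smul, sign_prod, tensor_transpose]

lemma YPtY {n : ℕ} (a : Fin n → Fin 4) :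
    PauliProd (fun _ => 2) * (PauliProd a)ᵀ * PauliProd (fun _ => 2)
      = ((-1 : ℂ) ^ (wt a)) • PauliProd a := by
  simp only [PauliProd_eq_tensor, tensor_transpose, tensor_mul]
  have : (fun k => pauli 2 * (pauli (a k))ᵀ * pauli 2)
      = fun k => (if a k = 0 then (1:ℂ) else -1) • pauli (a k) := by
    funext k; exact pauli_sign' (a k)
  rw [this, tensor_smul, sign_prod]

lemma sum_pauli_mul {n : ℕ} (k l i j : Fin n → Fin 2) :
    ∑ a : Fin n → Fin 4, PauliProd a k l * PauliProd a i j
      = if k = j ∧ l = i then (2:ℂ)^n else 0 := by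
  simp only [PauliProd, Matrix.of_apply, ← Finset.prod_mul_distrib]
  have key := Fintype.prod_sum (ι := Fin n) (κ := fun _ => Fin 4)
    (f := fun m s => pauli s (k m) (l m) * pauli s (i m) (j m))
  rw [← key]
  simp only [pauli_complete]
  by_cases h : k = j ∧ l = i
  · rw [if_pos h]
    obtain ⟨h1, h2⟩ := h; subst h1; subst h2
    simp
  · rw [if_neg h]
    have : (¬ k = j) ∨ (¬ l = i) := by tauto
    rcases this with h' | h' <;>
    · obtain ⟨m, hm⟩ := Function.ne_iff.mp h'
      exact Finset.prod_eq_zero (Finset.mem_univ m) (by rw [if_neg]; tauto)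

lemma pauli_expand {n : ℕ} (A : Matrix (Fin n → Fin 2) (Fin n → Fin 2) ℂ) :
    ((2:ℂ)^n) • A = ∑ a : Fin n → Fin 4, (Matrix.trace (PauliProd a * A)) • PauliProd a := by
  ext i j
  simp only [Matrix.sum_apply, Matrix.smul_apply, smul_eq_mul, Matrix.trace,
    Matrix.diag_apply, Matrix.mul_apply]
  have h1 : ∀ a : Fin n → Fin 4,
      (∑ k, ∑ l, PauliProd a k l * A l k) * PauliProd a i j
        = ∑ k, ∑ l, (PauliProd a k l * PauliProd a i j) * A l k := by
    intro a
    rw [Finset.sum_mul]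
    refine Finset.sum_congr rfl fun k _ => ?_
    rw [Finset.sum_mul]
    exact Finset.sum_congr rfl fun l _ => by ring
  rw [Finset.sum_congr rfl fun a _ => h1 a, Finset.sum_comm]
  have h2 : ∀ k : Fin n → Fin 2,
      (∑ a : Fin n → Fin 4, ∑ l, (PauliProd a k l * PauliProd a i j) * A l k)
        = ∑ l, (∑ a : Fin n → Fin 4, PauliProd a k l * PauliProd a i j) * A l k := by
    intro k
    rw [Finset.sum_comm]
    exact Finset.sum_congr rfl fun l _ => by rw [Finset.sum_mul]
  rw [Finset.sum_congr rfl fun k _ => h2 k]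
  simp only [sum_pauli_mul]
  simp [ite_and]

lemma real_smul_matrix {n : ℕ} (r : ℝ) (M : Matrix (Fin n → Fin 2) (Fin n → Fin 2) ℂ) :
    r • M = (r : ℂ) • M := by
  ext i j; simp [Complex.real_smul]


/-- The Lie algebra generated by i times odd-weight Paulis equals the set of
matrices A with Y^{⊗n} Aᵀ Y^{⊗n} = -A and A† = -A. -/
theorem odd_pauli_span_eq {n : ℕ} :
    (↑(Submodule.span ℝ
      {M : Matrix (Fin n → Fin 2) (Fin n → Fin 2) ℂ |
        ∃ a : Fin n → Fin 4, Odd (wt a) ∧ M = Complex.I • PauliProd a}) :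
        Set (Matrix (Fin n → Fin 2) (Fin n → Fin 2) ℂ)) =
      {A : Matrix (Fin n → Fin 2) (Fin n → Fin 2) ℂ |
        PauliProd (fun _ => 2) * Aᵀ * PauliProd (fun _ => 2) = -A ∧ Aᴴ = -A} := by
  ext A
  simp only [SetLike.mem_coe, Set.mem_setOf_eq]
  constructor
  · intro hA
    induction hA using Submodule.span_induction with
    | mem x hx =>
      obtain ⟨a, ha, rfl⟩ := hx
      constructor
      · rw [Matrix.transpose_smul, Matrix.mul_smul, Matrix.smul_mul, YPtY,
          ha.neg_one_pow]
        simp [smul_smul]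
      · rw [Matrix.conjTranspose_smul, PauliProd_herm]
        simp [Complex.star_def, Complex.conj_I]
    | zero => simp
    | add x y hx hy ihx ihy =>
      obtain ⟨p1, p2⟩ := ihx; obtain ⟨q1, q2⟩ := ihy
      refine ⟨?_, ?_⟩
      · rw [Matrix.transpose_add, Matrix.mul_add, Matrix.add_mul, p1, q1, neg_add]
      · rw [Matrix.conjTranspose_add, p2, q2, neg_add]
    | smul r x hx ih =>
      obtain ⟨p1, p2⟩ := ih
      refine ⟨?_, ?_⟩
      · rw [Matrix.transpose_smul, Matrix.mul_smul, Matrix.smul_mul, p1, smul_neg]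
      · rw [Matrix.conjTranspose_smul, p2, smul_neg, star_trivial]
  · rintro ⟨h1, h2⟩
    set c : (Fin n → Fin 4) → ℂ := fun a => Matrix.trace (PauliProd a * A) with hcdef
    have hconj : ∀ a, (starRingEnd ℂ) (c a) = - c a := by
      intro a
      have : (starRingEnd ℂ) (c a) = Matrix.trace ((PauliProd a * A)ᴴ) := by
        rw [Matrix.trace_conjTranspose]; rfl
      rw [this, Matrix.conjTranspose_mul, PauliProd_herm, h2,
        Matrix.neg_mul, Matrix.trace_neg, Matrix.trace_mul_comm]
    have hsign : ∀ a, c a = -(((-1:ℂ) ^ wt a) * c a) := by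
      intro a
      have hAeq : A = -(PauliProd (fun _ => 2) * Aᵀ * PauliProd (fun _ => 2)) := by
        rw [h1, neg_neg]
      calc c a = Matrix.trace (PauliProd a * A) := rfl
        _ = -(Matrix.trace (PauliProd a * (PauliProd (fun _ => 2) * Aᵀ *
              PauliProd (fun _ => 2)))) := by
            conv_lhs => rw [hAeq]
            rw [Matrix.mul_neg, Matrix.trace_neg]
        _ = -(Matrix.trace ((PauliProd (fun _ => 2) * PauliProd a *
              PauliProd (fun _ => 2)) * Aᵀ)) := by
            rw [show PauliProd a * (PauliProd (fun _ => 2) * Aᵀ * PauliProd (fun _ => 2))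
              = (PauliProd a * PauliProd (fun _ => 2) * Aᵀ) * PauliProd (fun _ => 2) by
                noncomm_ring,
              Matrix.trace_mul_comm]
            ring_nf
            rw [show PauliProd (fun _ : Fin n => (2:Fin 4)) * (PauliProd a *
              PauliProd (fun _ => 2) * Aᵀ) = (PauliProd (fun _ => 2) * PauliProd a *
              PauliProd (fun _ => 2)) * Aᵀ by noncomm_ring]
        _ = -(((-1:ℂ) ^ wt a) * Matrix.trace ((PauliProd a)ᵀ * Aᵀ)) := by
            rw [YPY, Matrix.smul_mul, Matrix.trace_smul, smul_eq_mul]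
        _ = -(((-1:ℂ) ^ wt a) * c a) := by
            rw [← Matrix.transpose_mul, Matrix.trace_transpose, Matrix.trace_mul_comm]
    have heven : ∀ a, Even (wt a) → c a = 0 := by
      intro a ha
      have := hsign a
      rw [ha.neg_one_pow, one_mul] at this
      have h0 : 2 * c a = 0 := by linear_combination this
      simpa using h0
    have h2n : (2:ℂ)^n ≠ 0 := pow_ne_zero _ two_ne_zero
    have hA : A = ∑ a : Fin n → Fin 4, (((2:ℂ)^n)⁻¹ * c a) • PauliProd a := by
      calc A = ((2:ℂ)^n)⁻¹ • (((2:ℂ)^n) • A) := by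
            rw [smul_smul, inv_mul_cancel₀ h2n, one_smul]
        _ = _ := by
            rw [pauli_expand, Finset.smul_sum]
            exact Finset.sum_congr rfl fun a _ => by rw [smul_smul]
    rw [hA]
    apply Submodule.sum_mem
    intro a _
    by_cases hodd : Odd (wt a)
    · have hcre : (c a).re = 0 := by
        have := congrArg Complex.re (hconj a)
        simp only [Complex.conj_re, Complex.neg_re] at this
        linarith
      set z : ℂ := ((2:ℂ)^n)⁻¹ * c a with hz
      have h2r : ((2:ℂ)^n)⁻¹ = ((((2:ℝ)^n)⁻¹ : ℝ) : ℂ) := by push_cast; ring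
      have hzre : z.re = 0 := by
        rw [hz, h2r, Complex.re_ofReal_mul, hcre, mul_zero]
      have hkey : z • PauliProd a = (z.im : ℝ) • (Complex.I • PauliProd a) := by
        rw [real_smul_matrix, smul_smul]
        congr 1
        apply Complex.ext <;> simp [hzre]
      rw [hkey]
      exact Submodule.smul_mem _ _ (Submodule.subset_span ⟨a, hodd, rfl⟩)
    · have : c a = 0 := heven a (Nat.not_odd_iff_even.mp hodd)
      rw [this, mul_zero, zero_smul]
      exact Submodule.zero_mem _
end

section
/- For any two distinct nonidentity Pauli products P(α), P(β), among Pauli products commuting with P(α), exactly half commute with P(β) and half anticommute with P(β) — provided P(β) is not equal to P(α) up to phase. -/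
open Matrix Complex

open scoped Classical

def e4 : Fin 4 → ZMod 2 × ZMod 2
  | 0 => (0, 0)
  | 1 => (1, 0)
  | 2 => (1, 1)
  | 3 => (0, 1)
def sp2 (p q : ZMod 2 × ZMod 2) : ZMod 2 := p.1 * q.2 + p.2 * q.1
noncomputable def chi (m : ZMod 2) : ℂ := if m = 0 then 1 else -1

noncomputable def genProd {n : ℕ} (M : Fin n → Matrix (Fin 2) (Fin 2) ℂ) :
    Matrix (Fin n → Fin 2) (Fin n → Fin 2) ℂ :=
  Matrix.of fun i j => ∏ k, M k (i k) (j k)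

lemma genProd_mul {n : ℕ} (M N : Fin n → Matrix (Fin 2) (Fin 2) ℂ) :
    genProd M * genProd N = genProd fun k => M k * N k := by
  ext i j
  simp only [genProd, Matrix.mul_apply, Matrix.of_apply]
  rw [← Fintype.piFinset_univ]
  simp_rw [← Finset.prod_mul_distrib]
  rw [← Finset.prod_univ_sum (fun _ => (Finset.univ : Finset (Fin 2)))
    (fun k m => M k (i k) m * N k m (j k))]

lemma genProd_smul {n : ℕ} (c : Fin n → ℂ) (M : Fin n → Matrix (Fin 2) (Fin 2) ℂ) :
    genProd (fun k => c k • M k) = (∏ k, c k) • genProd M := by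
  ext i j
  simp [genProd, Finset.prod_mul_distrib]

lemma chi_add (a b : ZMod 2) : chi (a + b) = chi a * chi b := by
  fin_cases a <;> fin_cases b <;> simp (config := { decide := true }) [chi] <;> split_ifs <;> first | rfl | (exfalso; rename_i h1; first | exact absurd h1 (by decide) | exact h1 rfl) | (exfalso; rename_i h1 h2; first | exact one_ne_zero h1 | exact one_ne_zero h2 | exact h1 rfl | exact h2 rfl) | norm_num

lemma chi_sum {n : ℕ} (f : Fin n → ZMod 2) : chi (∑ k, f k) = ∏ k, chi (f k) := by
  induction (Finset.univ : Finset (Fin n)) using Finset.induction with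
  | empty => simp [chi]
  | insert _ _ h ih => rw [Finset.sum_insert h, Finset.prod_insert h, chi_add, ih]

lemma pauli_swap (x y : Fin 4) :
    pauli y * pauli x = chi (sp2 (e4 x) (e4 y)) • (pauli x * pauli y) := by
  fin_cases x <;> fin_cases y <;>
    simp (config := { decide := true }) [pauli, e4, sp2, chi]

lemma pauli_det_ne_zero (x : Fin 4) : (pauli x).det ≠ 0 := by
  fin_cases x <;> simp [pauli, Matrix.det_fin_two_of, Matrix.det_one] <;>
    norm_num [Complex.I_mul_I]

lemma pauli_mul_ne_zero (x y : Fin 4) : ∃ i j : Fin 2, (pauli x * pauli y) i j ≠ 0 := by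
  by_contra h
  push_neg at h
  have hz : pauli x * pauli y = 0 := by ext i j; exact h i j
  have := congrArg Matrix.det hz
  rw [Matrix.det_mul, Matrix.det_zero] at this
  exact mul_ne_zero (pauli_det_ne_zero x) (pauli_det_ne_zero y) this

lemma genProd_pauli_mul_ne_zero {n : ℕ} (a c : Fin n → Fin 4) :
    genProd (fun k => pauli (a k) * pauli (c k)) ≠ 0 := by
  choose I J hIJ using pauli_mul_ne_zero
  intro h
  have h2 : (∏ k, (pauli (a k) * pauli (c k)) (I (a k) (c k)) (J (a k) (c k))) = 0 := by
    have := congrFun (congrFun h (fun k => I (a k) (c k))) (fun k => J (a k) (c k))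
    simpa [genProd] using this
  exact Finset.prod_ne_zero_iff.mpr (fun k _ => hIJ (a k) (c k)) h2

lemma commute_iff {n : ℕ} (a c : Fin n → Fin 4) :
    PauliProd a * PauliProd c = PauliProd c * PauliProd a ↔
      (∑ k, sp2 (e4 (a k)) (e4 (c k))) = 0 := by
  have hpp : ∀ d : Fin n → Fin 4, PauliProd d = genProd fun k => pauli (d k) := fun _ => rfl
  rw [hpp, hpp, genProd_mul, genProd_mul]
  have h1 : (genProd fun k => pauli (c k) * pauli (a k))
      = chi (∑ k, sp2 (e4 (a k)) (e4 (c k))) • genProd fun k => pauli (a k) * pauli (c k) := by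
    rw [chi_sum, ← genProd_smul]
    exact congrArg genProd (funext fun k => pauli_swap (a k) (c k))
  rw [h1]
  constructor
  · intro h
    by_contra hs
    have hchi : chi (∑ k, sp2 (e4 (a k)) (e4 (c k))) = -1 := by simp [chi, hs]
    rw [hchi] at h
    have : (2 : ℂ) • genProd (fun k => pauli (a k) * pauli (c k)) = 0 := by
      rw [two_smul]
      nth_rewrite 1 [h]
      simp
    rw [smul_eq_zero] at this
    exact genProd_pauli_mul_ne_zero a c (this.resolve_left (by norm_num))
  · intro h
    rw [h]
    simp [chi]

def e4inv : ZMod 2 × ZMod 2 → Fin 4 := fun p =>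
  if p = (0, 0) then 0 else if p = (1, 0) then 1 else if p = (1, 1) then 2 else 3

def E : Fin 4 ≃ ZMod 2 × ZMod 2 :=
  ⟨e4, e4inv, by decide, by decide⟩

lemma sp2_add_left (p q r : ZMod 2 × ZMod 2) : sp2 (p + q) r = sp2 p r + sp2 q r := by
  simp only [sp2, Prod.fst_add, Prod.snd_add]; ring

lemma sp2_zero_left (p : ZMod 2 × ZMod 2) : sp2 0 p = 0 := by
  simp [sp2]

lemma zmod2_cases (m : ZMod 2) : m = 0 ∨ m = 1 := by revert m; decide

lemma half_count {n : ℕ} (α b : Fin n → Fin 4)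
    (hα : α ≠ fun _ => 0) (hb : b ≠ fun _ => 0) (hbα : b ≠ α) :
    ((Finset.univ.filter fun a : Fin n → Fin 4 =>
          (∑ k, sp2 (e4 (a k)) (e4 (α k))) = 0).filter
        fun a => (∑ k, sp2 (e4 (a k)) (e4 (b k))) = 0).card
      = (Finset.univ.filter fun a : Fin n → Fin 4 =>
          (∑ k, sp2 (e4 (a k)) (e4 (α k))) = 0).card / 2 := by
  classical
  set Φ : (Fin n → ZMod 2 × ZMod 2) → ZMod 2 := fun w => ∑ k, sp2 (w k) (e4 (α k)) with hΦ
  set Ψ : (Fin n → ZMod 2 × ZMod 2) → ZMod 2 := fun w => ∑ k, sp2 (w k) (e4 (b k)) with hΨ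
  -- single coordinate functional evaluation
  have single : ∀ (q : ZMod 2 × ZMod 2) (k0 : Fin n) (c : Fin n → Fin 4),
      (∑ k, sp2 ((fun j => if j = k0 then q else 0) k) (e4 (c k))) = sp2 q (e4 (c k0)) := by
    intro q k0 c
    rw [Finset.sum_eq_single k0]
    · simp
    · intro j _ hj; simp [hj, sp2_zero_left]
    · simp
  -- additivity
  have addΦ : ∀ w v, Φ (w + v) = Φ w + Φ v := by
    intro w v
    simp only [hΦ, Pi.add_apply, sp2_add_left, Finset.sum_add_distrib]
  have addΨ : ∀ w v, Ψ (w + v) = Ψ w + Ψ v := by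
    intro w v
    simp only [hΨ, Pi.add_apply, sp2_add_left, Finset.sum_add_distrib]
  -- Φ attains 1
  have exΦ : ∃ u, Φ u = 1 := by
    obtain ⟨k0, hk0⟩ : ∃ k0, α k0 ≠ 0 := by
      by_contra h; push_neg at h; exact hα (funext h)
    have hne : e4 (α k0) ≠ 0 := by
      revert hk0; have : ∀ x : Fin 4, x ≠ 0 → e4 x ≠ 0 := by decide
      exact this (α k0)
    obtain ⟨q, hq⟩ : ∃ q, sp2 q (e4 (α k0)) = 1 := by
      revert hne; have : ∀ p : ZMod 2 × ZMod 2, p ≠ 0 → ∃ q, sp2 q p = 1 := by decide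
      exact this (e4 (α k0))
    exact ⟨fun j => if j = k0 then q else 0, (single q k0 α).trans hq⟩
  have exΨ : ∃ u, Ψ u = 1 := by
    obtain ⟨k0, hk0⟩ : ∃ k0, b k0 ≠ 0 := by
      by_contra h; push_neg at h; exact hb (funext h)
    have hne : e4 (b k0) ≠ 0 := by
      revert hk0; have : ∀ x : Fin 4, x ≠ 0 → e4 x ≠ 0 := by decide
      exact this (b k0)
    obtain ⟨q, hq⟩ : ∃ q, sp2 q (e4 (b k0)) = 1 := by
      revert hne; have : ∀ p : ZMod 2 × ZMod 2, p ≠ 0 → ∃ q, sp2 q p = 1 := by decide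
      exact this (e4 (b k0))
    exact ⟨fun j => if j = k0 then q else 0, (single q k0 b).trans hq⟩
  -- Φ ≠ Ψ
  have exDiff : ∃ w, Φ w ≠ Ψ w := by
    obtain ⟨k1, hk1⟩ : ∃ k1, b k1 ≠ α k1 := by
      by_contra h; push_neg at h; exact hbα (funext h)
    have hne : e4 (b k1) ≠ e4 (α k1) := by
      revert hk1; have : ∀ x y : Fin 4, x ≠ y → e4 x ≠ e4 y := by decide
      exact this (b k1) (α k1)
    obtain ⟨r, hr⟩ : ∃ r, sp2 r (e4 (α k1)) ≠ sp2 r (e4 (b k1)) := by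
      have h2 : ∀ p q : ZMod 2 × ZMod 2, p ≠ q → ∃ r, sp2 r q ≠ sp2 r p := by decide
      exact h2 _ _ hne
    refine ⟨fun j => if j = k1 then r else 0, ?_⟩
    rw [hΦ, hΨ]
    simpa [single r k1 α, single r k1 b] using hr
  -- the shift vector
  obtain ⟨v, hv0, hv1⟩ : ∃ v, Φ v = 0 ∧ Ψ v = 1 := by
    by_contra h
    push_neg at h
    have h' : ∀ v, Φ v = 0 → Ψ v = 0 := by
      intro v hv
      rcases zmod2_cases (Ψ v) with h0 | h1
      · exact h0
      · exact absurd h1 (h v hv)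
    obtain ⟨u, hu⟩ := exΦ
    obtain ⟨u', hu'⟩ := exΨ
    obtain ⟨w0, hw0⟩ := exDiff
    have key : ∀ w, Ψ w = Φ w * Ψ u := by
      intro w
      rcases zmod2_cases (Φ w) with h0 | h1
      · rw [h0, zero_mul]; exact h' w h0
      · have hΦwu : Φ (w + u) = 0 := by rw [addΦ, h1, hu]; decide
        have := h' _ hΦwu
        rw [addΨ] at this
        rw [h1, one_mul]
        rcases zmod2_cases (Ψ w) with hw | hw
        · rw [hw] at this ⊢; rw [zero_add] at this; exact this.symm
        · rw [hw] at this ⊢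
          rcases zmod2_cases (Ψ u) with hu2 | hu2
          · rw [hu2] at this; exact absurd this (by decide)
          · rw [hu2]
    rcases zmod2_cases (Ψ u) with hu2 | hu2
    · have := key u'
      rw [hu', hu2, mul_zero] at this
      exact absurd this (by decide)
    · apply hw0
      have := key w0
      rw [hu2, mul_one] at this
      exact this.symm
  -- the involution
  set T : (Fin n → Fin 4) → (Fin n → Fin 4) := fun a k => E.symm (e4 (a k) + v k) with hT
  have hTe4 : ∀ a k, e4 (T a k) = e4 (a k) + v k := by
    intro a k
    show E (E.symm (e4 (a k) + v k)) = _
    exact E.apply_symm_apply _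
  have hφT : ∀ a : Fin n → Fin 4,
      (∑ k, sp2 (e4 (T a k)) (e4 (α k))) = (∑ k, sp2 (e4 (a k)) (e4 (α k))) + Φ v := by
    intro a
    simp only [hTe4, sp2_add_left, Finset.sum_add_distrib, hΦ]
  have hψT : ∀ a : Fin n → Fin 4,
      (∑ k, sp2 (e4 (T a k)) (e4 (b k))) = (∑ k, sp2 (e4 (a k)) (e4 (b k))) + Ψ v := by
    intro a
    simp only [hTe4, sp2_add_left, Finset.sum_add_distrib, hΨ]
  have hTT : ∀ a, T (T a) = a := by
    intro a
    funext k
    have : e4 (T (T a) k) = e4 (a k) := by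
      rw [hTe4, hTe4, add_assoc]
      have h2 : ∀ p : ZMod 2 × ZMod 2, p + p = 0 := by decide
      rw [h2, add_zero]
    have hinj : Function.Injective e4 := E.injective
    exact hinj this
  -- counting
  set s := Finset.univ.filter (fun a : Fin n → Fin 4 =>
    (∑ k, sp2 (e4 (a k)) (e4 (α k))) = 0) with hs
  have hmemT : ∀ a : Fin n → Fin 4, a ∈ s → T a ∈ s := by
    intro a ha
    rw [hs, Finset.mem_filter] at ha ⊢
    refine ⟨Finset.mem_univ _, ?_⟩
    rw [hφT, ha.2, hv0, add_zero]
  have hcard : (s.filter fun a => (∑ k, sp2 (e4 (a k)) (e4 (b k))) = 0).card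
      = (s.filter fun a => (∑ k, sp2 (e4 (a k)) (e4 (b k))) = 1).card := by
    refine Finset.card_bij' (fun a _ => T a) (fun a _ => T a) ?_ ?_ ?_ ?_
    · intro a ha
      rw [Finset.mem_filter] at ha ⊢
      refine ⟨hmemT a ha.1, ?_⟩
      rw [hψT, ha.2, hv1, zero_add]
    · intro a ha
      rw [Finset.mem_filter] at ha ⊢
      refine ⟨hmemT a ha.1, ?_⟩
      rw [hψT, ha.2, hv1]
      decide
    · intro a _; exact hTT a
    · intro a _; exact hTT a
  have hOne : (s.filter fun a => ¬ (∑ k, sp2 (e4 (a k)) (e4 (b k))) = 0)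
      = (s.filter fun a => (∑ k, sp2 (e4 (a k)) (e4 (b k))) = 1) := by
    apply Finset.filter_congr
    intro a _
    rcases zmod2_cases (∑ k, sp2 (e4 (a k)) (e4 (b k))) with h | h <;> rw [h] <;> simp
  have hsplit : (s.filter fun a => (∑ k, sp2 (e4 (a k)) (e4 (b k))) = 0).card
      + (s.filter fun a => ¬ (∑ k, sp2 (e4 (a k)) (e4 (b k))) = 0).card = s.card :=
    Finset.card_filter_add_card_filter_not _
  rw [hOne, ← hcard] at hsplit
  set c0 := (s.filter fun a => (∑ k, sp2 (e4 (a k)) (e4 (b k))) = 0).card with hc0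
  have h2 : s.card = 2 * c0 := by rw [← hsplit, two_mul]
  rw [h2]
  exact (Nat.mul_div_cancel_left c0 (by norm_num)).symm


/-- Among the Pauli products commuting with a nonidentity P(α), exactly half
commute with another nonidentity P(b) with b ≠ α. -/
theorem half_commute_in_commutant {n : ℕ} (α b : Fin n → Fin 4)
    (hα : α ≠ fun _ => 0) (hb : b ≠ fun _ => 0) (hbα : b ≠ α) :
    ((Finset.univ.filter fun a : Fin n → Fin 4 =>
          PauliProd a * PauliProd α = PauliProd α * PauliProd a).filter
        fun a => PauliProd a * PauliProd b = PauliProd b * PauliProd a).card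
      = (Finset.univ.filter fun a : Fin n → Fin 4 =>
          PauliProd a * PauliProd α = PauliProd α * PauliProd a).card / 2 := by
  
  have h1 : (Finset.univ.filter fun a : Fin n → Fin 4 =>
        PauliProd a * PauliProd α = PauliProd α * PauliProd a)
      = Finset.univ.filter fun a : Fin n → Fin 4 =>
        (∑ k, sp2 (e4 (a k)) (e4 (α k))) = 0 :=
    Finset.filter_congr fun a _ => commute_iff a α
  have h2 : ((Finset.univ.filter fun a : Fin n → Fin 4 =>
        (∑ k, sp2 (e4 (a k)) (e4 (α k))) = 0).filter fun a =>
        PauliProd a * PauliProd b = PauliProd b * PauliProd a)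
      = ((Finset.univ.filter fun a : Fin n → Fin 4 =>
        (∑ k, sp2 (e4 (a k)) (e4 (α k))) = 0).filter fun a =>
        (∑ k, sp2 (e4 (a k)) (e4 (b k))) = 0) :=
    Finset.filter_congr fun a _ => commute_iff a b
  rw [h1, h2]
  exact half_count α b hα hb hbα
end
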